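/- Let H be a real Hilbert space with orthogonal projection P onto a closed subspace, let f, g ∈ H be nonzero, and write Q = I − P. Then |‖Pf‖²/‖f‖² − ‖Pg‖²/‖g‖²| + |‖Qf‖²/‖f‖² − ‖Qg‖²/‖g‖²| ≤ 2·‖f − g‖/‖f‖. -/

import Mathlib

open scoped RealInnerProductSpace

lemma pyth_aux {H : Type*} [NormedAddCommGroup H] [InnerProductSpace ℝ H] [CompleteSpace H]
    (K : Submodule ℝ H) [CompleteSpace K] (w : H) :
    ‖(K.orthogonalProjection w : H)‖ ^ 2 + ‖w - (K.orthogonalProjection w : H)‖ ^ 2 = ‖w‖ ^ 2 := by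
  have h : (⟪w - (K.orthogonalProjection w : H), (K.orthogonalProjection w : H)⟫) = 0 :=
    K.starProjection_inner_eq_zero w _ (K.orthogonalProjection w).2
  have h2 := norm_add_sq_real (w - (K.orthogonalProjection w : H)) (K.orthogonalProjection w : H)
  rw [sub_add_cancel, h] at h2
  linarith

lemma diff_sq_aux {H : Type*} [NormedAddCommGroup H] [InnerProductSpace ℝ H]
    (x y : H) : ‖x‖ ^ 2 - ‖y‖ ^ 2 = (⟪x - y, x + y⟫) := by
  rw [inner_sub_left, inner_add_right, inner_add_right,
    real_inner_self_eq_norm_sq, real_inner_self_eq_norm_sq, real_inner_comm x y]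
  ring

lemma scalar_key (A B A' B' x y z w t F G ε : ℝ)
    (hA : A ^ 2 + A' ^ 2 = 1) (hB : B ^ 2 + B' ^ 2 = 1)
    (hxz : x ^ 2 + z ^ 2 = 2 - 2 * t) (hyw : y ^ 2 + w ^ 2 = 2 + 2 * t)
    (hx : 0 ≤ x) (hy : 0 ≤ y) (hz : 0 ≤ z) (hw : 0 ≤ w)
    (h1 : |A ^ 2 - B ^ 2| ≤ x * y) (h2 : |A' ^ 2 - B' ^ 2| ≤ z * w)
    (hF : 0 < F) (hε : 0 ≤ ε)
    (hfg : F ^ 2 * (1 - t ^ 2) ≤ ε ^ 2) :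
    |A ^ 2 - B ^ 2| + |A' ^ 2 - B' ^ 2| ≤ 2 * (ε / F) := by
  have e12 : |A' ^ 2 - B' ^ 2| = |A ^ 2 - B ^ 2| := by
    have h : A' ^ 2 - B' ^ 2 = -(A ^ 2 - B ^ 2) := by linarith
    rw [h, abs_neg]
  rw [e12]
  set s := |A ^ 2 - B ^ 2| with hs
  have hs0 : 0 ≤ s := abs_nonneg _
  have hxz' : x * z ≤ 1 - t := by nlinarith [sq_nonneg (x - z)]
  have hyw' : y * w ≤ 1 + t := by nlinarith [sq_nonneg (y - w)]
  have hxz0 : 0 ≤ x * z := mul_nonneg hx hz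
  have hyw0 : 0 ≤ y * w := mul_nonneg hy hw
  have hsq : s ^ 2 ≤ 1 - t ^ 2 := by
    have h3 : s * s ≤ (x * y) * (z * w) := mul_le_mul h1 (e12 ▸ h2) hs0 (mul_nonneg hx hy)
    nlinarith [mul_le_mul hxz' hyw' hyw0 (le_trans hxz0 hxz')]
  have hFs : (F * s) ^ 2 ≤ ε ^ 2 := by nlinarith [sq_nonneg F, hF.le]
  have hFs' : F * s ≤ ε :=
    le_of_pow_le_pow_left₀ two_ne_zero hε hFs
  have : s ≤ ε / F := (le_div_iff₀ hF).mpr (by linarith [mul_comm F s])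
  linarith

theorem stmt_8 {H : Type*} [NormedAddCommGroup H] [InnerProductSpace ℝ H] [CompleteSpace H]
    (K : Submodule ℝ H) [CompleteSpace K]
    (f g : H) (hf : f ≠ 0) (hg : g ≠ 0) :
    |‖(K.orthogonalProjection f : H)‖ ^ 2 / ‖f‖ ^ 2 -
        ‖(K.orthogonalProjection g : H)‖ ^ 2 / ‖g‖ ^ 2| +
      |‖f - (K.orthogonalProjection f : H)‖ ^ 2 / ‖f‖ ^ 2 -
        ‖g - (K.orthogonalProjection g : H)‖ ^ 2 / ‖g‖ ^ 2| ≤ 2 * (‖f - g‖ / ‖f‖) := by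
  have hF : (0:ℝ) < ‖f‖ := norm_pos_iff.mpr hf
  have hG : (0:ℝ) < ‖g‖ := norm_pos_iff.mpr hg
  set u : H := ‖f‖⁻¹ • f with hu
  set v : H := ‖g‖⁻¹ • g with hv
  have hnu : ‖u‖ = 1 := by
    rw [hu, norm_smul, norm_inv, norm_norm, inv_mul_cancel₀ hF.ne']
  have hnv : ‖v‖ = 1 := by
    rw [hv, norm_smul, norm_inv, norm_norm, inv_mul_cancel₀ hG.ne']
  have hPu : (K.orthogonalProjection u : H) = ‖f‖⁻¹ • (K.orthogonalProjection f : H) := by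
    rw [hu, map_smul]; rfl
  have hPv : (K.orthogonalProjection v : H) = ‖g‖⁻¹ • (K.orthogonalProjection g : H) := by
    rw [hv, map_smul]; rfl
  have e1 : ‖(K.orthogonalProjection f : H)‖ ^ 2 / ‖f‖ ^ 2
      = ‖(K.orthogonalProjection u : H)‖ ^ 2 := by
    rw [hPu, norm_smul, norm_inv, norm_norm, mul_pow, inv_pow]
    field_simp
  have e2 : ‖(K.orthogonalProjection g : H)‖ ^ 2 / ‖g‖ ^ 2
      = ‖(K.orthogonalProjection v : H)‖ ^ 2 := by
    rw [hPv, norm_smul, norm_inv, norm_norm, mul_pow, inv_pow]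
    field_simp
  have e3 : ‖f - (K.orthogonalProjection f : H)‖ ^ 2 / ‖f‖ ^ 2
      = ‖u - (K.orthogonalProjection u : H)‖ ^ 2 := by
    rw [hPu, hu, ← smul_sub, norm_smul, norm_inv, norm_norm, mul_pow, inv_pow]
    field_simp
  have e4 : ‖g - (K.orthogonalProjection g : H)‖ ^ 2 / ‖g‖ ^ 2
      = ‖v - (K.orthogonalProjection v : H)‖ ^ 2 := by
    rw [hPv, hv, ← smul_sub, norm_smul, norm_inv, norm_norm, mul_pow, inv_pow]
    field_simp
  rw [e1, e2, e3, e4]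
  set Pu : H := (K.orthogonalProjection u : H) with hPu'
  set Pv : H := (K.orthogonalProjection v : H) with hPv'
  set t : ℝ := ⟪u, v⟫ with ht
  have pu : ‖Pu‖ ^ 2 + ‖u - Pu‖ ^ 2 = 1 := by
    have h := pyth_aux K u; rw [hnu] at h; simpa [hPu'] using h
  have pv : ‖Pv‖ ^ 2 + ‖v - Pv‖ ^ 2 = 1 := by
    have h := pyth_aux K v; rw [hnv] at h; simpa [hPv'] using h
  have hPsub : (K.orthogonalProjection (u - v) : H) = Pu - Pv := by
    rw [map_sub]; rfl
  have hPadd : (K.orthogonalProjection (u + v) : H) = Pu + Pv := by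
    rw [map_add]; rfl
  have psub : ‖Pu - Pv‖ ^ 2 + ‖(u - Pu) - (v - Pv)‖ ^ 2 = 2 - 2 * t := by
    have h := pyth_aux K (u - v)
    rw [hPsub] at h
    have hr : u - v - (Pu - Pv) = (u - Pu) - (v - Pv) := by abel
    rw [hr] at h
    rw [h, norm_sub_sq_real, hnu, hnv, ht]; ring
  have padd : ‖Pu + Pv‖ ^ 2 + ‖(u - Pu) + (v - Pv)‖ ^ 2 = 2 + 2 * t := by
    have h := pyth_aux K (u + v)
    rw [hPadd] at h
    have hr : u + v - (Pu + Pv) = (u - Pu) + (v - Pv) := by abel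
    rw [hr] at h
    rw [h, norm_add_sq_real, hnu, hnv, ht]; ring
  have h1 : |‖Pu‖ ^ 2 - ‖Pv‖ ^ 2| ≤ ‖Pu - Pv‖ * ‖Pu + Pv‖ := by
    rw [diff_sq_aux]; exact abs_real_inner_le_norm _ _
  have h2 : |‖u - Pu‖ ^ 2 - ‖v - Pv‖ ^ 2|
      ≤ ‖(u - Pu) - (v - Pv)‖ * ‖(u - Pu) + (v - Pv)‖ := by
    rw [diff_sq_aux]; exact abs_real_inner_le_norm _ _
  have hfg : ‖f‖ ^ 2 * (1 - t ^ 2) ≤ ‖f - g‖ ^ 2 := by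
    have hinner : (⟪f, g⟫ : ℝ) = ‖f‖ * ‖g‖ * t := by
      rw [ht, hu, hv, real_inner_smul_left, real_inner_smul_right]
      field_simp
    have hfg2 : ‖f - g‖ ^ 2 = ‖f‖ ^ 2 - 2 * (‖f‖ * ‖g‖ * t) + ‖g‖ ^ 2 := by
      rw [norm_sub_sq_real, hinner]
    nlinarith [sq_nonneg (‖g‖ - ‖f‖ * t)]
  exact scalar_key _ _ _ _ _ _ _ _ t ‖f‖ ‖g‖ ‖f - g‖ pu pv psub padd
    (norm_nonneg _) (norm_nonneg _) (norm_nonneg _) (norm_nonneg _) h1 h2 hF (norm_nonneg _) hfg
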